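/- arXiv:1101.3252 — 2 statements merged into one kernel-verified Lean document; each statement's English description precedes it below -/
import Mathlib

section
/- Let Q and Q̃ be axis-parallel squares in ℝ² with centers x and x̃ respectively, with x ≠ x̃. Let Θ_{Q,Q̃} be the set of angles θ ∈ [−π/2, π/2] for which the orthogonal projections of Q and Q̃ onto the line L_θ through the origin in direction (cos θ, sin θ) intersect. Then the Lebesgue measure of Θ_{Q,Q̃} is at most 2π · max{|Q|, |Q̃|} / |x − x̃|, where |Q| denotes the diameter of Q. -/
open MeasureTheory Set Metric ENNReal Real

noncomputable section

/-- The plane with the Euclidean metric. -/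
abbrev E := EuclideanSpace ℝ (Fin 2)

/-- The half-open dyadic square `[a·2⁻ⁱ, (a+1)·2⁻ⁱ) × [b·2⁻ⁱ, (b+1)·2⁻ⁱ)`. -/
def dyadicSq (i a b : ℤ) : Set E :=
  {p | p 0 ∈ Set.Ico ((a : ℝ) * 2 ^ (-i)) ((a + 1 : ℝ) * 2 ^ (-i)) ∧
       p 1 ∈ Set.Ico ((b : ℝ) * 2 ^ (-i)) ((b + 1 : ℝ) * 2 ^ (-i))}

/-- A dyadic square is an element of some family `𝒟ᵢ`. -/
def IsDyadicSquare (S : Set E) : Prop := ∃ i a b : ℤ, S = dyadicSq i a b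
/-- The orthogonal projection onto the line `L_θ = ℝ·(cos θ, sin θ)`, identified with ℝ
via the isometry `t·v_θ ↦ t`. -/
def proj (θ : ℝ) (p : E) : ℝ := p 0 * Real.cos θ + p 1 * Real.sin θ
/-- The axis-parallel square with center `c` and side length `l`. -/
def sqc (c : E) (l : ℝ) : Set E :=
  {p | p 0 ∈ Set.Ico (c 0 - l / 2) (c 0 + l / 2) ∧
       p 1 ∈ Set.Ico (c 1 - l / 2) (c 1 + l / 2)}

/- ### Auxiliary lemmas -/

lemma tv_dist_eq2 (p q : E) : dist p q = Real.sqrt ((p 0 - q 0)^2 + (p 1 - q 1)^2) := by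
  rw [EuclideanSpace.dist_eq, Fin.sum_univ_two]
  simp [Real.dist_eq, abs_mul_abs_self, sq]

lemma tv_cauchy (θ a b : ℝ) : |a * Real.cos θ + b * Real.sin θ| ≤ Real.sqrt (a^2 + b^2) := by
  have h : (a * Real.cos θ + b * Real.sin θ)^2 ≤ a^2 + b^2 := by
    nlinarith [Real.sin_sq_add_cos_sq θ, sq_nonneg (a * Real.sin θ - b * Real.cos θ)]
  calc |a * Real.cos θ + b * Real.sin θ| = Real.sqrt ((a * Real.cos θ + b * Real.sin θ)^2) :=
        (Real.sqrt_sq_eq_abs _).symm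
    _ ≤ Real.sqrt (a^2 + b^2) := Real.sqrt_le_sqrt h

lemma tv_dist_center {c : E} {l : ℝ} (hl : 0 < l) {p : E} (hp : p ∈ sqc c l) :
    dist p c ≤ Real.sqrt 2 * l / 2 := by
  obtain ⟨⟨h1, h2⟩, ⟨h3, h4⟩⟩ := hp
  rw [tv_dist_eq2]
  have e : Real.sqrt 2 * l / 2 = Real.sqrt ((l/2)^2 + (l/2)^2) := by
    rw [show (l/2)^2 + (l/2)^2 = 2 * (l/2)^2 by ring, Real.sqrt_mul (by norm_num),
      Real.sqrt_sq (by linarith)]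
    ring
  rw [e]
  apply Real.sqrt_le_sqrt
  nlinarith [sq_nonneg (p 0 - c 0), sq_nonneg (p 1 - c 1)]

lemma tv_sqc_bounded {c : E} {l : ℝ} (hl : 0 < l) : Bornology.IsBounded (sqc c l) :=
  (isBounded_closedBall (x := c) (r := Real.sqrt 2 * l / 2)).subset
    (fun _ hp => mem_closedBall.2 (tv_dist_center hl hp))

lemma tv_diam_lower {c : E} {l : ℝ} (hl : 0 < l) : Real.sqrt 2 * l ≤ diam (sqc c l) := by
  have key : ∀ t, 0 ≤ t → t < l → Real.sqrt 2 * t ≤ diam (sqc c l) := by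
    intro t ht0 htl
    set a : E := !₂[c 0 - l/2, c 1 - l/2] with ha'
    set b : E := !₂[c 0 - l/2 + t, c 1 - l/2 + t] with hb'
    have ha : a ∈ sqc c l := by
      constructor <;> simp [ha', sqc] <;> linarith
    have hbm : b ∈ sqc c l := by
      refine ⟨⟨?_, ?_⟩, ⟨?_, ?_⟩⟩ <;> simp [hb'] <;> linarith
    have hd : dist a b = Real.sqrt 2 * t := by
      rw [tv_dist_eq2]
      have e0 : a 0 - b 0 = -t := by simp [ha', hb']
      have e1 : a 1 - b 1 = -t := by simp [ha', hb']
      rw [e0, e1, show (-t)^2 + (-t)^2 = 2 * t^2 by ring, Real.sqrt_mul (by norm_num),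
        Real.sqrt_sq ht0]
    calc Real.sqrt 2 * t = dist a b := hd.symm
      _ ≤ diam (sqc c l) := dist_le_diam_of_mem (tv_sqc_bounded hl) ha hbm
  by_contra h
  push_neg at h
  have h2 : (0:ℝ) < Real.sqrt 2 := by positivity
  have hDl : diam (sqc c l) / Real.sqrt 2 < l := by
    rw [div_lt_iff₀ h2]
    calc diam (sqc c l) < Real.sqrt 2 * l := h
      _ = l * Real.sqrt 2 := mul_comm _ _
  obtain ⟨t, ht1, ht2⟩ := exists_between hDl
  have ht0 : 0 ≤ t := le_of_lt (lt_of_le_of_lt (by positivity) ht1)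
  have := key t ht0 ht2
  rw [div_lt_iff₀ h2] at ht1
  nlinarith

lemma tv_sin_small {δ t : ℝ} (h0 : 0 ≤ δ) (h2 : δ < π/2) (h : |Real.sin t| ≤ Real.sin δ) :
    |t - round (t/π) * π| ≤ δ := by
  set k := round (t/π) with hk
  set u := t - k * π with hu
  have hpi := Real.pi_pos
  have hu2 : |u| ≤ π/2 := by
    have h5 := abs_sub_round (t/π)
    have h6 : |t/π - k| * π ≤ (1/2) * π := mul_le_mul_of_nonneg_right h5 (le_of_lt hpi)
    have e : u = (t/π - k) * π := by
      rw [hu]; field_simp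
    calc |u| = |t/π - k| * π := by rw [e, abs_mul, abs_of_pos hpi]
      _ ≤ π/2 := by linarith
  have hsin : |Real.sin u| = |Real.sin t| := by
    have : t = u + (k:ℤ) * π := by push_cast; ring
    rw [this, Real.sin_add_int_mul_pi, abs_mul]
    have h7 : |(-1:ℝ)^k| = 1 := by
      rcases Int.even_or_odd k with he|ho
      · rw [he.neg_one_zpow, abs_one]
      · rw [ho.neg_one_zpow, abs_neg, abs_one]
    rw [h7, one_mul]
  have hu3 := abs_le.1 hu2
  by_contra hc
  push_neg at hc
  have h3 : Real.sin δ < Real.sin |u| := by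
    apply Real.strictMonoOn_sin ⟨by linarith, by linarith⟩ ⟨by linarith [abs_nonneg u], hu2⟩ hc
  have h4 : Real.sin |u| = |Real.sin u| := by
    rcases le_or_gt 0 u with h'|h'
    · rw [abs_of_nonneg h', abs_of_nonneg (Real.sin_nonneg_of_nonneg_of_le_pi h' (by linarith))]
    · rw [abs_of_neg h', Real.sin_neg, abs_of_nonpos]
      apply Real.sin_nonpos_of_nonpos_of_neg_pi_le (le_of_lt h')
      linarith
  rw [h4, hsin] at h3
  linarith

lemma tv_arcsin_le {ε : ℝ} (h0 : 0 ≤ ε) (h1 : ε ≤ 1) : Real.arcsin ε ≤ π/2 * ε := by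
  have ha0 : 0 ≤ Real.arcsin ε := Real.arcsin_nonneg.2 h0
  have ha1 : Real.arcsin ε ≤ π/2 := Real.arcsin_le_pi_div_two ε
  have := Real.mul_le_sin ha0 ha1
  rw [Real.sin_arcsin (by linarith) h1] at this
  have hpi := Real.pi_pos
  rw [div_mul_eq_mul_div, div_le_iff₀ hpi] at this
  nlinarith

lemma tv_polar (d0 d1 : ℝ) (hd : ¬(d0 = 0 ∧ d1 = 0)) :
    ∃ φ : ℝ, ∀ θ : ℝ, d0 * Real.cos θ + d1 * Real.sin θ =
      Real.sqrt (d0^2 + d1^2) * Real.cos (θ - φ) := by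
  set z : ℂ := ⟨d0, d1⟩ with hz
  have hz0 : z ≠ 0 := by
    intro hh
    exact hd ⟨congrArg Complex.re hh, congrArg Complex.im hh⟩
  have habs : ‖z‖ = Real.sqrt (d0^2 + d1^2) := by
    rw [Complex.norm_def, Complex.normSq_apply]
    norm_num [hz, sq]
  refine ⟨Complex.arg z, fun θ => ?_⟩
  have hc := Complex.cos_arg hz0
  have hs := Complex.sin_arg z
  have hr : (0:ℝ) < ‖z‖ := norm_pos_iff.mpr hz0
  rw [Real.cos_sub]
  rw [hc, hs] at *
  rw [← habs]
  field_simp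
  ring

lemma tv_round_mono : Monotone (round : ℝ → ℤ) := by
  intro a b hab
  rw [round_eq, round_eq]
  exact Int.floor_mono (by linarith)

/-- Transversality: the set of angles for which the projections of two squares overlap
has Lebesgue measure at most `2π·max{|Q|,|Q̃|}/|x−x̃|`. -/
theorem measure_angles_of_overlapping_projections
    (x x' : E) (l l' : ℝ) (hl : 0 < l) (hl' : 0 < l') (hxx : x ≠ x') :
    volume {θ ∈ Set.Icc (-(π / 2)) (π / 2) |
        (proj θ '' sqc x l ∩ proj θ '' sqc x' l').Nonempty} ≤
      ENNReal.ofReal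
        (2 * π * max (Metric.diam (sqc x l)) (Metric.diam (sqc x' l')) / dist x x') := by
  have hpi := Real.pi_pos
  set M := max (Metric.diam (sqc x l)) (Metric.diam (sqc x' l')) with hM'
  have hM : 0 < M := lt_of_lt_of_le (by positivity : (0:ℝ) < Real.sqrt 2 * l)
    (le_trans (tv_diam_lower hl) (le_max_left _ _))
  set r := dist x x' with hr'
  have hr0 : 0 < r := dist_pos.2 hxx
  set d0 := x 0 - x' 0 with hd0
  set d1 := x 1 - x' 1 with hd1
  have hrd : r = Real.sqrt (d0^2 + d1^2) := tv_dist_eq2 x x'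
  have hd : ¬(d0 = 0 ∧ d1 = 0) := by
    rintro ⟨h1, h2⟩
    apply hxx
    ext i
    fin_cases i
    · simpa using sub_eq_zero.1 h1
    · simpa using sub_eq_zero.1 h2
  obtain ⟨φ, hφ⟩ := tv_polar d0 d1 hd
  set T := {θ ∈ Set.Icc (-(π / 2)) (π / 2) | |Real.cos (θ - φ)| * r ≤ M} with hT'
  have hsub : {θ ∈ Set.Icc (-(π / 2)) (π / 2) |
        (proj θ '' sqc x l ∩ proj θ '' sqc x' l').Nonempty} ⊆ T := by
    rintro θ ⟨hθI, t, ⟨⟨p, hp, hpt⟩, ⟨q, hq, hqt⟩⟩⟩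
    refine ⟨hθI, ?_⟩
    have est : ∀ (c : E) (s : ℝ), 0 < s → ∀ p ∈ sqc c s,
        |proj θ c - proj θ p| ≤ diam (sqc c s) / 2 := by
      intro c s hs p hp
      have h1 : proj θ c - proj θ p
          = (c 0 - p 0) * Real.cos θ + (c 1 - p 1) * Real.sin θ := by
        simp only [proj]; ring
      calc |proj θ c - proj θ p| ≤ Real.sqrt ((c 0 - p 0)^2 + (c 1 - p 1)^2) := by
            rw [h1]; exact tv_cauchy θ _ _
        _ = dist c p := (tv_dist_eq2 c p).symm
        _ = dist p c := dist_comm c p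
        _ ≤ Real.sqrt 2 * s / 2 := tv_dist_center hs hp
        _ ≤ diam (sqc c s) / 2 := by linarith [tv_diam_lower (c := c) hs]
    have e1 := est x l hl p hp
    have e2 := est x' l' hl' q hq
    have key : proj θ x - proj θ x' = d0 * Real.cos θ + d1 * Real.sin θ := by
      simp only [proj, hd0, hd1]; ring
    have split : proj θ x - proj θ x' = (proj θ x - proj θ p) - (proj θ x' - proj θ q) := by
      rw [hpt, hqt]; ring
    have hb : |proj θ x - proj θ x'| ≤ M := by
      rw [split]
      calc |(proj θ x - proj θ p) - (proj θ x' - proj θ q)|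
          ≤ |proj θ x - proj θ p| + |proj θ x' - proj θ q| := abs_sub _ _
        _ ≤ diam (sqc x l) / 2 + diam (sqc x' l') / 2 := add_le_add e1 e2
        _ ≤ M := by
            have := le_max_left (diam (sqc x l)) (diam (sqc x' l'))
            have := le_max_right (diam (sqc x l)) (diam (sqc x' l'))
            rw [hM']; linarith
    calc |Real.cos (θ - φ)| * r = |r * Real.cos (θ - φ)| := by
          rw [abs_mul, abs_of_pos hr0]; ring
      _ = |proj θ x - proj θ x'| := by rw [key, hφ θ, hrd]
      _ ≤ M := hb
  refine le_trans (measure_mono hsub) ?_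
  rcases le_or_gt r (2 * M) with hcase | hcase
  · calc volume T ≤ volume (Set.Icc (-(π / 2)) (π / 2)) := measure_mono (sep_subset _ _)
      _ = ENNReal.ofReal π := by rw [Real.volume_Icc]; norm_num
      _ ≤ ENNReal.ofReal (2 * π * M / r) := by
          apply ENNReal.ofReal_le_ofReal
          rw [le_div_iff₀ hr0]
          nlinarith
  · have hε1 : M / r < 1 := by rw [div_lt_one hr0]; linarith
    have hε0 : 0 < M / r := by positivity
    set δ := Real.arcsin (M / r) with hδ'
    have hδ0 : 0 ≤ δ := Real.arcsin_nonneg.2 hε0.le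
    have hδ2 : δ < π/2 := Real.arcsin_lt_pi_div_two.2 hε1
    have hsinδ : Real.sin δ = M / r := Real.sin_arcsin (by linarith) hε1.le
    set ψ := φ - π/2 with hψ'
    set m := round ((-(π/2) - ψ)/π) with hm'
    have hsub2 : T ⊆ Set.Icc ((m:ℝ)*π + ψ - δ) ((m:ℝ)*π + ψ + δ)
        ∪ Set.Icc (((m:ℝ)+1)*π + ψ - δ) (((m:ℝ)+1)*π + ψ + δ) := by
      rintro θ ⟨⟨hθ1, hθ2⟩, hθ⟩
      have h1 : |Real.sin (θ - ψ)| ≤ Real.sin δ := by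
        rw [hsinδ]
        have e : Real.sin (θ - ψ) = Real.cos (θ - φ) := by
          rw [show θ - ψ = (θ - φ) + π/2 by rw [hψ']; ring, Real.sin_add_pi_div_two]
        rw [e, ← le_div_iff₀ hr0] at *
        exact hθ
      have h2 := tv_sin_small hδ0 hδ2 h1
      have hk1 : m ≤ round ((θ - ψ)/π) := by
        rw [hm']
        exact tv_round_mono (by gcongr <;> linarith)
      have hk2 : round ((θ - ψ)/π) ≤ m + 1 := by
        have e : (π/2 - ψ)/π = (-(π/2) - ψ)/π + 1 := by field_simp; ring
        have h8 := tv_round_mono (show (θ - ψ)/π ≤ (π/2 - ψ)/π by gcongr <;> linarith)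
        rw [e, round_add_one, ← hm'] at h8
        exact h8
      have hk : round ((θ - ψ)/π) = m ∨ round ((θ - ψ)/π) = m + 1 := by omega
      have h3 := abs_le.1 h2
      rcases hk with hk | hk <;> rw [hk] at h3
      · left
        have := h3.1; have := h3.2
        constructor <;> linarith
      · right
        have c1 : ((m + 1 : ℤ) : ℝ) = (m : ℝ) + 1 := by push_cast; ring
        rw [c1] at h3
        have := h3.1; have := h3.2
        constructor <;> linarith
    calc volume T ≤ volume (Set.Icc ((m:ℝ)*π + ψ - δ) ((m:ℝ)*π + ψ + δ)
          ∪ Set.Icc (((m:ℝ)+1)*π + ψ - δ) (((m:ℝ)+1)*π + ψ + δ)) := measure_mono hsub2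
      _ ≤ volume (Set.Icc ((m:ℝ)*π + ψ - δ) ((m:ℝ)*π + ψ + δ))
          + volume (Set.Icc (((m:ℝ)+1)*π + ψ - δ) (((m:ℝ)+1)*π + ψ + δ)) :=
            measure_union_le _ _
      _ = ENNReal.ofReal (2*δ) + ENNReal.ofReal (2*δ) := by
          rw [Real.volume_Icc, Real.volume_Icc]
          congr 1 <;> · congr 1; ring
      _ = ENNReal.ofReal (4*δ) := by
          rw [← ENNReal.ofReal_add (by linarith) (by linarith)]
          congr 1
          ring
      _ ≤ ENNReal.ofReal (2 * π * M / r) := by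
          apply ENNReal.ofReal_le_ofReal
          have h9 := tv_arcsin_le hε0.le hε1.le
          have hMr : M / r * r = M := div_mul_cancel₀ M hr0.ne'
          rw [hδ', le_div_iff₀ hr0]
          nlinarith [mul_le_mul_of_nonneg_right h9 hr0.le]
end
end

section
/- Let s > 1 and let 𝒞 be a good dyadic cover of an s-set K ⊂ [0,1)², i.e., a finite family of disjoint dyadic squares with Σ_{Q̃ ∈ 𝒞, Q̃ ⊂ Q} |Q̃|ˢ ≤ C·|Q|ˢ for every dyadic square Q, and with Σ_{Q ∈ 𝒞} |Q|ˢ ≤ C. Then Σ_{Q, Q̃ ∈ 𝒞, Q ≠ Q̃} |x_Q − x_{Q̃}|⁻¹ · |Q|ˢ · |Q̃|ˢ ≤ C', where x_Q denotes the center of Q and C' depends only on C and s. -/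
open MeasureTheory Set Metric ENNReal Real

noncomputable section

/-- The dyadic square associated to a parameter triple. -/
def dsq (q : ℤ × ℤ × ℤ) : Set E := dyadicSq q.1 q.2.1 q.2.2

/-- The unit square `[0,1)²`. -/
def unitSq : Set E := {p | p 0 ∈ Set.Ico (0 : ℝ) 1 ∧ p 1 ∈ Set.Ico (0 : ℝ) 1}
/-- The center of the dyadic square with parameters `q = (i, a, b)`. -/
def dctr (q : ℤ × ℤ × ℤ) : E :=
  (EuclideanSpace.equiv (Fin 2) ℝ).symm
    ![((q.2.1 : ℝ) + 1 / 2) * 2 ^ (-q.1), ((q.2.2 : ℝ) + 1 / 2) * 2 ^ (-q.1)]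

lemma coord_le_dist (x y : E) (i : Fin 2) : |x i - y i| ≤ dist x y := by
  rw [EuclideanSpace.dist_eq]
  simp only [Real.dist_eq]
  rw [show |x i - y i| = Real.sqrt (|x i - y i|^2) by rw [sq_abs]; exact (Real.sqrt_sq_eq_abs _).symm]
  apply Real.sqrt_le_sqrt
  apply Finset.single_le_sum (f := fun j => |x j - y j|^2) (fun j _ => sq_nonneg _) (Finset.mem_univ i)

lemma dist_le_coords {x y : E} {c : ℝ} (h0 : |x 0 - y 0| ≤ c) (h1 : |x 1 - y 1| ≤ c) :
    dist x y ≤ Real.sqrt 2 * c := by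
  have hc : 0 ≤ c := le_trans (abs_nonneg _) h0
  rw [EuclideanSpace.dist_eq, Fin.sum_univ_two]
  simp only [Real.dist_eq, sq_abs]
  have : (x 0 - y 0)^2 + (x 1 - y 1)^2 ≤ 2 * c^2 := by
    have a0 : (x 0 - y 0)^2 ≤ c^2 := by rw [← sq_abs]; exact pow_le_pow_left₀ (abs_nonneg _) h0 2
    have a1 : (x 1 - y 1)^2 ≤ c^2 := by rw [← sq_abs]; exact pow_le_pow_left₀ (abs_nonneg _) h1 2
    nlinarith
  calc Real.sqrt ((x 0 - y 0)^2 + (x 1 - y 1)^2) ≤ Real.sqrt (2 * c^2) := Real.sqrt_le_sqrt this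
    _ = Real.sqrt 2 * c := by rw [Real.sqrt_mul (by norm_num), Real.sqrt_sq hc]

lemma two_zpow_pos (i : ℤ) : (0:ℝ) < 2 ^ i := zpow_pos (by norm_num) i

lemma center_mem_dsq (q : ℤ × ℤ × ℤ) : dctr q ∈ dsq q := by
  obtain ⟨i, a, b⟩ := q
  have h2 : (0:ℝ) < 2 ^ (-i) := two_zpow_pos _
  constructor <;>
  · constructor
    · apply mul_le_mul_of_nonneg_right _ h2.le; linarith
    · apply mul_lt_mul_of_pos_right _ h2; linarith

lemma dist_center_ge {q : ℤ × ℤ × ℤ} {p : E} (hp : p ∉ dsq q) :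
    2 ^ (-q.1 - 1) ≤ dist (dctr q) p := by
  obtain ⟨i, a, b⟩ := q
  have h2 : (0:ℝ) < 2 ^ (-i) := two_zpow_pos _
  have key : ∀ (c : ℤ) (x : ℝ), x ∉ Set.Ico ((c : ℝ) * 2 ^ (-i)) ((c + 1 : ℝ) * 2 ^ (-i)) →
      2 ^ (-i - 1) ≤ |((c : ℝ) + 1 / 2) * 2 ^ (-i) - x| := by
    intro c x hx
    have he : (2:ℝ) ^ (-i - 1) = 2 ^ (-i) / 2 := by
      rw [zpow_sub₀ (by norm_num : (2:ℝ) ≠ 0)]; ring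
    rw [Set.mem_Ico, not_and_or, not_le, not_lt] at hx
    rw [he]
    rcases hx with hx | hx
    · rw [abs_of_nonneg (by nlinarith)]; nlinarith
    · rw [abs_of_nonpos (by nlinarith)]; nlinarith
  simp only [dsq, dyadicSq, Set.mem_setOf_eq, not_and_or] at hp
  rcases hp with hp | hp
  · exact le_trans (key a (p 0) hp) (coord_le_dist (dctr (i, a, b)) p 0)
  · exact le_trans (key b (p 1) hp) (coord_le_dist (dctr (i, a, b)) p 1)

lemma diam_dyadicSq_le (i a b : ℤ) : Metric.diam (dyadicSq i a b) ≤ Real.sqrt 2 * 2 ^ (-i) := by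
  have h2 : (0:ℝ) < 2 ^ (-i) := two_zpow_pos _
  apply Metric.diam_le_of_forall_dist_le (by positivity)
  rintro x ⟨hx0, hx1⟩ y ⟨hy0, hy1⟩
  apply dist_le_coords
  · rw [abs_sub_le_iff]; constructor <;> [skip; skip] <;>
      · simp only [Set.mem_Ico] at hx0 hy0; nlinarith [hx0.1, hx0.2, hy0.1, hy0.2]
  · rw [abs_sub_le_iff]; constructor <;> [skip; skip] <;>
      · simp only [Set.mem_Ico] at hx1 hy1; nlinarith [hx1.1, hx1.2, hy1.1, hy1.2]

lemma ico_subset_ancestor {m i : ℤ} (h : m ≤ i) (a : ℤ) :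
    ∃ c : ℤ, Set.Ico ((a:ℝ) * 2 ^ (-i)) ((a+1 : ℝ) * 2 ^ (-i)) ⊆
      Set.Ico ((c:ℝ) * 2 ^ (-m)) ((c+1 : ℝ) * 2 ^ (-m)) := by
  set k : ℕ := (i - m).toNat with hk
  have hik : i = m + (k:ℤ) := by simp [hk, Int.toNat_of_nonneg (sub_nonneg.2 h)]
  set D : ℤ := 2 ^ k with hD
  have hDpos : (0:ℤ) < D := by positivity
  refine ⟨a / D, ?_⟩
  have h1 : D * (a / D) + a % D = a := Int.mul_ediv_add_emod a D
  have h2 : 0 ≤ a % D := Int.emod_nonneg a hDpos.ne'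
  have h3 : a % D < D := Int.emod_lt_of_pos a hDpos
  have hl : (a / D : ℤ) * D ≤ a := by rw [mul_comm]; linarith
  have hr : a < (a / D + 1) * D := by
    have : (a / D + 1) * D = D * (a / D) + D := by ring
    rw [this]; linarith
  have hDr : ((D:ℤ):ℝ) * 2 ^ (-i) = 2 ^ (-m) := by
    push_cast [hD]
    rw [← zpow_natCast (2:ℝ) k, ← zpow_add₀ (by norm_num : (2:ℝ) ≠ 0)]
    congr 1; omega
  rintro x ⟨hx1, hx2⟩
  have hl' : (((a / D : ℤ)):ℝ) * (D:ℝ) ≤ (a:ℝ) := by exact_mod_cast hl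
  have hr' : ((a:ℝ) + 1) ≤ (((a / D : ℤ)):ℝ) * (D:ℝ) + (D:ℝ) := by
    have : ((a:ℝ) + 1) ≤ (((a / D + 1 : ℤ)):ℝ) * (D:ℝ) := by exact_mod_cast hr
    push_cast at this ⊢; linarith
  have h2i : (0:ℝ) < 2 ^ (-i) := two_zpow_pos _
  constructor
  · rw [← hDr, ← mul_assoc]
    exact le_trans (mul_le_mul_of_nonneg_right hl' h2i.le) hx1
  · have k2 : ((a:ℝ) + 1) * 2 ^ (-i) ≤ ((((a / D : ℤ)):ℝ) + 1) * ((D:ℝ) * 2 ^ (-i)) := by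
      calc ((a:ℝ) + 1) * 2 ^ (-i) ≤ ((((a / D : ℤ)):ℝ) * (D:ℝ) + (D:ℝ)) * 2 ^ (-i) :=
            mul_le_mul_of_nonneg_right hr' h2i.le
        _ = ((((a / D : ℤ)):ℝ) + 1) * ((D:ℝ) * 2 ^ (-i)) := by ring
    rw [← hDr]
    exact lt_of_lt_of_le hx2 k2

lemma dsq_subset_ancestor {m : ℤ} {q : ℤ × ℤ × ℤ} (h : m ≤ q.1) :
    ∃ c d : ℤ, dsq q ⊆ dyadicSq m c d ∧
      c = ⌊dctr q 0 * 2 ^ m⌋ ∧ d = ⌊dctr q 1 * 2 ^ m⌋ := by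
  obtain ⟨c, hc⟩ := ico_subset_ancestor h q.2.1
  obtain ⟨d, hd⟩ := ico_subset_ancestor h q.2.2
  have hsub : dsq q ⊆ dyadicSq m c d := fun p hp => ⟨hc hp.1, hd hp.2⟩
  have hmem := hsub (center_mem_dsq q)
  have hcancel : (2:ℝ) ^ (-m) * 2 ^ m = 1 := by
    rw [← zpow_add₀ (by norm_num : (2:ℝ) ≠ 0)]; simp
  have h2m : (0:ℝ) < 2 ^ m := two_zpow_pos _
  have id1 : ∀ (c : ℤ) (x : ℝ), x ∈ Set.Ico ((c:ℝ) * 2 ^ (-m)) ((c+1:ℝ) * 2 ^ (-m)) →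
      c = ⌊x * 2 ^ m⌋ := by
    rintro c x ⟨h1, h2⟩
    symm
    rw [Int.floor_eq_iff]
    constructor
    · have := mul_le_mul_of_nonneg_right h1 h2m.le
      rw [mul_assoc, hcancel, mul_one] at this; linarith
    · have := mul_lt_mul_of_pos_right h2 h2m
      rw [mul_assoc, hcancel, mul_one] at this; push_cast; linarith
  exact ⟨c, d, hsub, id1 c _ hmem.1, id1 d _ hmem.2⟩

lemma floor_two_cases {t u : ℝ} (h : |t - u| ≤ 1/2) :
    ⌊u - 1/2⌋ = ⌊t⌋ ∨ ⌊u - 1/2⌋ + 1 = ⌊t⌋ := by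
  rw [abs_sub_le_iff] at h
  have h1 : u - 1/2 ≤ t := by linarith [h.1, h.2]
  have h2 : t ≤ (u - 1/2) + 1 := by linarith [h.1, h.2]
  have l1 : ⌊u - 1/2⌋ ≤ ⌊t⌋ := Int.floor_mono h1
  have l2 : ⌊t⌋ ≤ ⌊u - 1/2⌋ + 1 := by
    have := Int.floor_mono h2
    rwa [Int.floor_add_one] at this
  omega

lemma sum_union_le {α : Type*} [DecidableEq α] (s t : Finset α) (g : α → ℝ)
    (hg : ∀ x, 0 ≤ g x) : ∑ x ∈ s ∪ t, g x ≤ ∑ x ∈ s, g x + ∑ x ∈ t, g x := by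
  have := Finset.sum_union_inter (s₁ := s) (s₂ := t) (f := g)
  have h0 : 0 ≤ ∑ x ∈ s ∩ t, g x := Finset.sum_nonneg fun x _ => hg x
  linarith

lemma pow_r_eq (s : ℝ) (j : ℕ) : (2:ℝ)^j * ((2:ℝ)^(-(j:ℤ)))^s = ((2:ℝ)^(1-s))^j := by
  rw [← Real.rpow_natCast 2 j, ← Real.rpow_intCast 2 (-(j:ℤ)),
    ← Real.rpow_natCast ((2:ℝ)^(1-s)) j, ← Real.rpow_mul (by norm_num : (0:ℝ) ≤ 2),
    ← Real.rpow_mul (by norm_num : (0:ℝ) ≤ 2), ← Real.rpow_add (by norm_num : (0:ℝ) < 2)]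
  congr 1
  push_cast
  ring

open scoped Classical in
lemma inner_sum_bound (s C : ℝ) (hs : 1 < s) (hC : 0 < C)
    (𝒞 : Finset (ℤ × ℤ × ℤ))
    (hdisj : ∀ q ∈ 𝒞, ∀ q' ∈ 𝒞, q ≠ q' → Disjoint (dsq q) (dsq q'))
    (hgood : ∀ i a b : ℤ,
      (∑ q ∈ 𝒞.filter (fun q => dsq q ⊆ dyadicSq i a b), Metric.diam (dsq q) ^ s) ≤
        C * Metric.diam (dyadicSq i a b) ^ s)
    (htot : (∑ q ∈ 𝒞, Metric.diam (dsq q) ^ s) ≤ C)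
    (q : ℤ × ℤ × ℤ) (hq : q ∈ 𝒞) :
    ∑ q' ∈ 𝒞.erase q, (dist (dctr q) (dctr q'))⁻¹ * Metric.diam (dsq q') ^ s ≤
      2 * C + (8 * C * (2 * Real.sqrt 2) ^ s) * (1 - (2:ℝ) ^ (1 - s))⁻¹ := by
  set r : ℝ := (2:ℝ) ^ (1 - s) with hr
  have hr0 : 0 < r := Real.rpow_pos_of_pos (by norm_num) _
  have hr1 : r < 1 := Real.rpow_lt_one_of_one_lt_of_neg (by norm_num) (by linarith)
  set K : ℝ := 8 * C * (2 * Real.sqrt 2) ^ s with hK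
  have hK0 : 0 < K := by
    have : (0:ℝ) < (2 * Real.sqrt 2) ^ s := Real.rpow_pos_of_pos (by positivity) _
    positivity
  set g : (ℤ × ℤ × ℤ) → ℝ := fun q' => (dist (dctr q) (dctr q'))⁻¹ * Metric.diam (dsq q') ^ s
    with hgdef
  have hg : ∀ q', 0 ≤ g q' := by
    intro q'
    apply mul_nonneg (inv_nonneg.2 dist_nonneg) (Real.rpow_nonneg Metric.diam_nonneg _)
  set T := 𝒞.erase q with hT
  have hdistge : ∀ q' ∈ T, (2:ℝ) ^ (-q'.1 - 1) ≤ dist (dctr q) (dctr q') := by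
    intro q' hq'
    have hne : q ≠ q' := fun h => (Finset.ne_of_mem_erase hq') h.symm
    have hdj := hdisj q hq q' (Finset.mem_of_mem_erase hq') hne
    have : dctr q ∉ dsq q' := fun h => (Set.disjoint_left.1 hdj (center_mem_dsq q)) h
    rw [dist_comm]
    exact dist_center_ge this
  have hdistpos : ∀ q' ∈ T, 0 < dist (dctr q) (dctr q') :=
    fun q' hq' => lt_of_lt_of_le (two_zpow_pos _) (hdistge q' hq')
  set J : (ℤ × ℤ × ℤ) → ℕ := fun q' => ⌊Real.logb 2 (dist (dctr q) (dctr q'))⁻¹⌋₊ with hJ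
  set N : ℕ := T.sup J + 1 with hN
  have hmaps : ∀ q' ∈ T, J q' ∈ Finset.range N :=
    fun q' hq' => Finset.mem_range.mpr (Nat.lt_succ_of_le (Finset.le_sup hq'))
  rw [show (∑ q' ∈ T, g q') = ∑ j ∈ Finset.range N, ∑ q' ∈ T.filter (fun q' => J q' = j), g q'
    from (Finset.sum_fiberwise_of_maps_to hmaps g).symm]
  have perfiber : ∀ j ∈ Finset.range N,
      (∑ q' ∈ T.filter (fun q' => J q' = j), g q') ≤
        (if j = 0 then 2 * C else 0) + K * r ^ j := by
    intro j _
    have hss : (0:ℝ) ≤ s := by linarith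
    rcases Nat.eq_zero_or_pos j with hj0 | hjpos
    · subst hj0
      simp only [if_pos rfl, pow_zero, mul_one]
      have hb : ∀ q' ∈ T.filter (fun q' => J q' = 0),
          g q' ≤ 2 * Metric.diam (dsq q') ^ s := by
        intro q' hq'
        obtain ⟨hqT, hJ0⟩ := Finset.mem_filter.1 hq'
        have hd := hdistpos q' hqT
        have hy : (0:ℝ) < (dist (dctr q) (dctr q'))⁻¹ := by positivity
        have hlog : Real.logb 2 (dist (dctr q) (dctr q'))⁻¹ < 1 := by
          rcases lt_or_ge (Real.logb 2 (dist (dctr q) (dctr q'))⁻¹) 0 with h'|h'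
          · linarith
          · have := (Nat.floor_eq_iff h').1 hJ0
            simpa using this.2
        have hinv : (dist (dctr q) (dctr q'))⁻¹ < 2 := by
          have h2 := (Real.logb_lt_iff_lt_rpow one_lt_two hy).1 hlog
          simpa [Real.rpow_one] using h2
        exact mul_le_mul_of_nonneg_right hinv.le (Real.rpow_nonneg Metric.diam_nonneg _)
      have hsubC : T.filter (fun q' => J q' = 0) ⊆ 𝒞 :=
        fun x hx => Finset.mem_of_mem_erase (Finset.mem_filter.1 hx).1
      have c1 : (∑ q' ∈ T.filter (fun q' => J q' = 0), g q') ≤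
          2 * ∑ q' ∈ 𝒞, Metric.diam (dsq q') ^ s := by
        calc (∑ q' ∈ T.filter (fun q' => J q' = 0), g q')
            ≤ ∑ q' ∈ T.filter (fun q' => J q' = 0), 2 * Metric.diam (dsq q') ^ s :=
              Finset.sum_le_sum hb
          _ = 2 * ∑ q' ∈ T.filter (fun q' => J q' = 0), Metric.diam (dsq q') ^ s := by
              rw [Finset.mul_sum]
          _ ≤ 2 * ∑ q' ∈ 𝒞, Metric.diam (dsq q') ^ s := by
              have := Finset.sum_le_sum_of_subset_of_nonneg hsubC
                (fun x _ _ => Real.rpow_nonneg (Metric.diam_nonneg (s := dsq x)) s)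
              linarith
      have hKpos : 0 ≤ K := hK0.le
      have hgoal : (∑ q' ∈ T.filter (fun q' => J q' = 0), g q') ≤ 2 * C + K := by
        nlinarith [c1, htot]
      simpa using hgoal
    · have hj1 : 1 ≤ j := hjpos
      set m : ℤ := (j:ℤ) - 1 with hm
      set A : ℤ := ⌊dctr q 0 * 2 ^ m - 1/2⌋ with hA
      set B : ℤ := ⌊dctr q 1 * 2 ^ m - 1/2⌋ with hB
      set F : ℤ → ℤ → Finset (ℤ × ℤ × ℤ) :=
        fun c d => 𝒞.filter (fun q' => dsq q' ⊆ dyadicSq m c d) with hF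
      have h2m : (0:ℝ) < 2 ^ m := two_zpow_pos _
      have key : ∀ q' ∈ T.filter (fun q' => J q' = j),
          (dist (dctr q) (dctr q'))⁻¹ ≤ 2 ^ (j+1) ∧
          (q' ∈ F A B ∨ q' ∈ F A (B+1) ∨ q' ∈ F (A+1) B ∨ q' ∈ F (A+1) (B+1)) := by
        intro q' hq'
        obtain ⟨hqT, hJj⟩ := Finset.mem_filter.1 hq'
        have hd := hdistpos q' hqT
        have hy : (0:ℝ) < (dist (dctr q) (dctr q'))⁻¹ := by positivity
        have hx0 : (0:ℝ) ≤ Real.logb 2 (dist (dctr q) (dctr q'))⁻¹ := by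
          by_contra h'
          push_neg at h'
          have : J q' = 0 := Nat.floor_of_nonpos h'.le
          omega
        have hfl := (Nat.floor_eq_iff hx0).1 hJj
        have h1 : (2:ℝ) ^ (j:ℕ) ≤ (dist (dctr q) (dctr q'))⁻¹ := by
          have := (Real.le_logb_iff_rpow_le one_lt_two hy).1 hfl.1
          rwa [Real.rpow_natCast] at this
        have h2 : (dist (dctr q) (dctr q'))⁻¹ < (2:ℝ) ^ (j+1 : ℕ) := by
          have := (Real.logb_lt_iff_lt_rpow one_lt_two hy).1 hfl.2
          rw [show ((j:ℝ) + 1) = ((j+1 : ℕ) : ℝ) by push_cast; ring, Real.rpow_natCast] at this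
          exact this
        refine ⟨h2.le, ?_⟩
        have hdle : dist (dctr q) (dctr q') ≤ (2:ℝ) ^ (-(j:ℤ)) := by
          rw [show ((2:ℝ) ^ (-(j:ℤ))) = ((2:ℝ) ^ (j:ℕ))⁻¹ by
            rw [zpow_neg, zpow_natCast]]
          rw [show dist (dctr q) (dctr q') = ((dist (dctr q) (dctr q'))⁻¹)⁻¹ by rw [inv_inv]]
          exact inv_anti₀ (by positivity) h1
        have hmq : m ≤ q'.1 := by
          have hzz : (2:ℝ) ^ (-q'.1 - 1) ≤ (2:ℝ) ^ (-(j:ℤ)) :=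
            le_trans (hdistge q' hqT) hdle
          have := (zpow_le_zpow_iff_right₀ (by norm_num : (1:ℝ) < 2)).1 hzz
          omega
        obtain ⟨c, d, hsub, hcf, hdf⟩ := dsq_subset_ancestor hmq
        have hcoord : ∀ i : Fin 2,
            |dctr q' i * 2 ^ m - dctr q i * 2 ^ m| ≤ 1/2 := by
          intro i
          rw [← sub_mul, abs_mul, abs_of_pos h2m]
          have hc := coord_le_dist (dctr q') (dctr q) i
          rw [dist_comm] at hc
          calc |dctr q' i - dctr q i| * 2 ^ m
              ≤ (2:ℝ) ^ (-(j:ℤ)) * 2 ^ m := by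
                apply mul_le_mul_of_nonneg_right (le_trans hc hdle) h2m.le
            _ = 1/2 := by
                rw [← zpow_add₀ (by norm_num : (2:ℝ) ≠ 0)]
                rw [show -(j:ℤ) + m = -1 by omega]
                norm_num
        have hcc : A = c ∨ A + 1 = c := by
          rw [hcf]; exact floor_two_cases (hcoord 0)
        have hdd : B = d ∨ B + 1 = d := by
          rw [hdf]; exact floor_two_cases (hcoord 1)
        have hmemF : q' ∈ F c d :=
          Finset.mem_filter.2 ⟨Finset.mem_of_mem_erase hqT, hsub⟩
        rcases hcc with hcc | hcc <;> rcases hdd with hdd | hdd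
        · exact Or.inl (by rw [hcc, hdd]; exact hmemF)
        · exact Or.inr (Or.inl (by rw [hcc, hdd]; exact hmemF))
        · exact Or.inr (Or.inr (Or.inl (by rw [hcc, hdd]; exact hmemF)))
        · exact Or.inr (Or.inr (Or.inr (by rw [hcc, hdd]; exact hmemF)))
      have hFle : ∀ c d : ℤ, (∑ q' ∈ F c d, Metric.diam (dsq q') ^ s) ≤
          C * (Real.sqrt 2 * 2 ^ (-m)) ^ s := by
        intro c d
        refine le_trans (hgood m c d) ?_
        apply mul_le_mul_of_nonneg_left _ hC.le
        exact Real.rpow_le_rpow Metric.diam_nonneg (diam_dyadicSq_le m c d) hss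
      have step1 : (∑ q' ∈ T.filter (fun q' => J q' = j), g q') ≤
          (2:ℝ) ^ (j+1) * ∑ q' ∈ T.filter (fun q' => J q' = j), Metric.diam (dsq q') ^ s := by
        rw [Finset.mul_sum]
        apply Finset.sum_le_sum
        intro q' hq'
        exact mul_le_mul_of_nonneg_right (key q' hq').1 (Real.rpow_nonneg Metric.diam_nonneg _)
      have hdnn : ∀ x : ℤ × ℤ × ℤ, 0 ≤ Metric.diam (dsq x) ^ s :=
        fun x => Real.rpow_nonneg Metric.diam_nonneg _
      have step2 : (∑ q' ∈ T.filter (fun q' => J q' = j), Metric.diam (dsq q') ^ s) ≤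
          (∑ q' ∈ F A B, Metric.diam (dsq q') ^ s) +
          (∑ q' ∈ F A (B+1), Metric.diam (dsq q') ^ s) +
          (∑ q' ∈ F (A+1) B, Metric.diam (dsq q') ^ s) +
          (∑ q' ∈ F (A+1) (B+1), Metric.diam (dsq q') ^ s) := by
        have hsub4 : T.filter (fun q' => J q' = j) ⊆
            F A B ∪ (F A (B+1) ∪ (F (A+1) B ∪ F (A+1) (B+1))) := by
          intro x hx
          rcases (key x hx).2 with h|h|h|h <;> simp [Finset.mem_union, h]
        calc (∑ q' ∈ T.filter (fun q' => J q' = j), Metric.diam (dsq q') ^ s)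
            ≤ ∑ q' ∈ F A B ∪ (F A (B+1) ∪ (F (A+1) B ∪ F (A+1) (B+1))),
                Metric.diam (dsq q') ^ s :=
              Finset.sum_le_sum_of_subset_of_nonneg hsub4 (fun x _ _ => hdnn x)
          _ ≤ _ := by
              have u1 := sum_union_le (F A B) (F A (B+1) ∪ (F (A+1) B ∪ F (A+1) (B+1)))
                (fun q' => Metric.diam (dsq q') ^ s) hdnn
              have u2 := sum_union_le (F A (B+1)) (F (A+1) B ∪ F (A+1) (B+1))
                (fun q' => Metric.diam (dsq q') ^ s) hdnn
              have u3 := sum_union_le (F (A+1) B) (F (A+1) (B+1))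
                (fun q' => Metric.diam (dsq q') ^ s) hdnn
              linarith
      have harith : (2:ℝ) ^ (j+1) * (4 * (C * (Real.sqrt 2 * 2 ^ (-m)) ^ s)) = K * r ^ j := by
        have e1 : Real.sqrt 2 * 2 ^ (-m) = (2 * Real.sqrt 2) * 2 ^ (-(j:ℤ)) := by
          rw [show -m = -(j:ℤ) + 1 by omega, zpow_add₀ (by norm_num : (2:ℝ) ≠ 0)]
          ring
        rw [e1, Real.mul_rpow (by positivity) (by positivity), hK, hr]
        rw [← pow_r_eq s j, pow_succ]
        ring
      have hfinal : (∑ q' ∈ T.filter (fun q' => J q' = j), g q') ≤ K * r ^ j := by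
        rw [← harith]
        calc (∑ q' ∈ T.filter (fun q' => J q' = j), g q')
            ≤ (2:ℝ) ^ (j+1) * ∑ q' ∈ T.filter (fun q' => J q' = j),
                Metric.diam (dsq q') ^ s := step1
          _ ≤ (2:ℝ) ^ (j+1) * (4 * (C * (Real.sqrt 2 * 2 ^ (-m)) ^ s)) := by
              apply mul_le_mul_of_nonneg_left _ (by positivity)
              have := hFle A B
              have := hFle A (B+1)
              have := hFle (A+1) B
              have := hFle (A+1) (B+1)
              linarith [step2]
      rw [if_neg (by omega : ¬ j = 0), zero_add]
      exact hfinal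
  calc (∑ j ∈ Finset.range N, ∑ q' ∈ T.filter (fun q' => J q' = j), g q')
      ≤ ∑ j ∈ Finset.range N, ((if j = 0 then 2 * C else 0) + K * r ^ j) :=
        Finset.sum_le_sum perfiber
    _ = (∑ j ∈ Finset.range N, (if j = 0 then 2 * C else 0)) +
        K * ∑ j ∈ Finset.range N, r ^ j := by
        rw [Finset.sum_add_distrib, Finset.mul_sum]
    _ ≤ 2 * C + K * (1 - r)⁻¹ := by
        have e1 : (∑ j ∈ Finset.range N, if j = 0 then 2 * C else 0) ≤ 2 * C := by
          rw [Finset.sum_ite_eq' (Finset.range N) 0 (fun _ => 2 * C)]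
          split_ifs with h
          · exact le_refl _
          · positivity
        have e2 : (∑ j ∈ Finset.range N, r ^ j) ≤ (1 - r)⁻¹ :=
          le_trans (Summable.sum_le_tsum (Finset.range N) (fun i _ => by positivity)
            (summable_geometric_of_lt_one hr0.le hr1))
            (le_of_eq (tsum_geometric_of_lt_one hr0.le hr1))
        have := mul_le_mul_of_nonneg_left e2 hK0.le
        linarith


open scoped Classical in
/-- For a good dyadic cover of an `s`-set (`s > 1`), the double sum
`Σ_{Q ≠ Q̃} |x_Q − x_{Q̃}|⁻¹·|Q|ˢ·|Q̃|ˢ` is bounded by a constant depending only on the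
good-cover constant `C` and on `s`. -/
theorem double_sum_bound (s C : ℝ) (hs : 1 < s) (hC : 0 < C) :
    ∃ C' : ℝ, 0 < C' ∧
      ∀ (K : Set E) (𝒞 : Finset (ℤ × ℤ × ℤ)),
        K ⊆ unitSq → MeasurableSet K → dimH K = ENNReal.ofReal s →
        0 < μH[s] K → μH[s] K < ⊤ →
        (K ⊆ ⋃ q ∈ 𝒞, dsq q) →
        (∀ q ∈ 𝒞, ∀ q' ∈ 𝒞, q ≠ q' → Disjoint (dsq q) (dsq q')) →
        (∀ i a b : ℤ,
          (∑ q ∈ 𝒞.filter (fun q => dsq q ⊆ dyadicSq i a b), Metric.diam (dsq q) ^ s) ≤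
            C * Metric.diam (dyadicSq i a b) ^ s) →
        (∑ q ∈ 𝒞, Metric.diam (dsq q) ^ s) ≤ C →
        (∑ q ∈ 𝒞, ∑ q' ∈ 𝒞,
            if q ≠ q' then
              (dist (dctr q) (dctr q'))⁻¹ * Metric.diam (dsq q) ^ s * Metric.diam (dsq q') ^ s
            else 0) ≤ C' := by
  
  set r : ℝ := (2:ℝ) ^ (1 - s) with hr
  have hr0 : 0 < r := Real.rpow_pos_of_pos (by norm_num) _
  have hr1 : r < 1 := Real.rpow_lt_one_of_one_lt_of_neg (by norm_num) (by linarith)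
  set Kc : ℝ := 8 * C * (2 * Real.sqrt 2) ^ s with hKc
  have hK0 : 0 < Kc := by
    have : (0:ℝ) < (2 * Real.sqrt 2) ^ s := Real.rpow_pos_of_pos (by positivity) _
    positivity
  set A : ℝ := 2 * C + Kc * (1 - r)⁻¹ with hA
  have hA0 : 0 < A := by
    have : 0 < (1 - r)⁻¹ := by
      apply inv_pos.2; linarith
    positivity
  refine ⟨C * A, by positivity, ?_⟩
  intro K 𝒞 _ _ _ _ _ _ hdisj hgood htot
  have hmain : ∀ q ∈ 𝒞,
      (∑ q' ∈ 𝒞, if q ≠ q' then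
          (dist (dctr q) (dctr q'))⁻¹ * Metric.diam (dsq q) ^ s * Metric.diam (dsq q') ^ s
        else 0) ≤ Metric.diam (dsq q) ^ s * A := by
    intro q hq
    have e1 : (∑ q' ∈ 𝒞, if q ≠ q' then
          (dist (dctr q) (dctr q'))⁻¹ * Metric.diam (dsq q) ^ s * Metric.diam (dsq q') ^ s
        else 0) = ∑ q' ∈ 𝒞.erase q,
          (dist (dctr q) (dctr q'))⁻¹ * Metric.diam (dsq q) ^ s * Metric.diam (dsq q') ^ s := by
      rw [← Finset.sum_filter, Finset.filter_ne]
    rw [e1]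
    have e2 : (∑ q' ∈ 𝒞.erase q,
          (dist (dctr q) (dctr q'))⁻¹ * Metric.diam (dsq q) ^ s * Metric.diam (dsq q') ^ s) =
        Metric.diam (dsq q) ^ s * ∑ q' ∈ 𝒞.erase q,
          (dist (dctr q) (dctr q'))⁻¹ * Metric.diam (dsq q') ^ s := by
      rw [Finset.mul_sum]
      apply Finset.sum_congr rfl
      intro x _
      ring
    rw [e2]
    apply mul_le_mul_of_nonneg_left _ (Real.rpow_nonneg Metric.diam_nonneg _)
    exact inner_sum_bound s C hs hC 𝒞 hdisj hgood htot q hq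
  calc (∑ q ∈ 𝒞, ∑ q' ∈ 𝒞, if q ≠ q' then
          (dist (dctr q) (dctr q'))⁻¹ * Metric.diam (dsq q) ^ s * Metric.diam (dsq q') ^ s
        else 0)
      ≤ ∑ q ∈ 𝒞, Metric.diam (dsq q) ^ s * A := Finset.sum_le_sum hmain
    _ = (∑ q ∈ 𝒞, Metric.diam (dsq q) ^ s) * A := by rw [Finset.sum_mul]
    _ ≤ C * A := mul_le_mul_of_nonneg_right htot hA0.le
end
end
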